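/- Let T ∈ ℕ, ε > 0. Let d : ℝ^p → ℝ be a differentiable convex function with Bregman distance ξ(x,y) := d(y) − d(x) − ⟨∇d(x), y − x⟩, with x_0 a minimizer of d. Let h : ℝ^p → ℝ be convex and for each t = 0,…,T let g_t : ℝ^p → ℝ be convex and differentiable. Let L_1,…,L_{T+1} > 0 and define the estimate functions φ_0(x) := ξ(x_0, x) and φ_{t+1}(x) := φ_t(x) + (1/(2L_{t+1}))·[g_t(x_t) + ⟨∇g_t(x_t), x − x_t⟩ + h(x)], where for each t ≥ 0 the point x_{t+1} is a minimizer of φ_{t+1}. Suppose that for each t = 0,…,T there is a point y_t with g_t(y_t) + h(y_t) ≤ (inf over x of [g_t(x_t) + ⟨∇g_t(x_t), x − x_t⟩ + 2L_{t+1}·ξ(x_t, x) + h(x)]) + ε/2. Then for all t = 0,…,T, ∑_{i=0}^{t} (1/(2L_{i+1}))·(g_i(y_i) + h(y_i)) ≤ φ_{t+1}(x_{t+1}) + (ε/4)·∑_{i=0}^{t} (1/L_{i+1}). -/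

import Mathlib

open scoped InnerProductSpace
open Filter Topology

section Aux

variable {E : Type*} [NormedAddCommGroup E] [InnerProductSpace ℝ E] [CompleteSpace E]

lemma inner_gradient_eq_fderiv' (d : E → ℝ) (x : E) (v : E) :
    ⟪gradient d x, v⟫_ℝ = fderiv ℝ d x v := by
  rw [gradient, InnerProductSpace.toDual_symm_apply]

lemma min_first_order' (d q : E → ℝ) (hd : Differentiable ℝ d)
    (hq : ConvexOn ℝ Set.univ q) (x : E)
    (hmin : ∀ z, d x + q x ≤ d z + q z) (z : E) :
    -(⟪gradient d x, z - x⟫_ℝ) ≤ q z - q x := by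
  set v := z - x with hv
  have hline : HasDerivAt (fun t : ℝ => d (x + t • v)) (fderiv ℝ d x v) 0 := by
    have h1 : HasDerivAt (fun t : ℝ => x + t • v) v 0 := by
      simpa using ((hasDerivAt_id (0:ℝ)).smul_const v).const_add x
    have h2 : HasFDerivAt d (fderiv ℝ d x) (x + (0:ℝ) • v) := by
      simpa using (hd x).hasFDerivAt
    exact h2.comp_hasDerivAt 0 h1
  have hslope : Tendsto (slope (fun t : ℝ => d (x + t • v)) 0) (𝓝[>] (0:ℝ))
      (𝓝 (fderiv ℝ d x v)) :=
    (hasDerivAt_iff_tendsto_slope.mp hline).mono_left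
      (nhdsWithin_mono _ (fun t ht => ne_of_gt ht))
  have hev : ∀ᶠ t in 𝓝[>] (0:ℝ),
      -(q z - q x) ≤ slope (fun t : ℝ => d (x + t • v)) 0 t := by
    filter_upwards [Ioc_mem_nhdsGT (zero_lt_one (α := ℝ))] with t ht
    obtain ⟨ht0, ht1⟩ := ht
    have hcomb : q (x + t • v) ≤ (1 - t) * q x + t * q z := by
      have := hq.2 (Set.mem_univ x) (Set.mem_univ z) (by linarith : (0:ℝ) ≤ 1 - t)
        (le_of_lt ht0) (by ring)
      have heq : (1 - t) • x + t • z = x + t • v := by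
        rw [hv]; module
      simpa [heq, smul_eq_mul] using this
    have hm := hmin (x + t • v)
    have key : t * (q x - q z) ≤ d (x + t • v) - d x := by nlinarith
    rw [slope_def_field, zero_smul, add_zero, sub_zero, le_div_iff₀ ht0]
    nlinarith
  have hfin : -(q z - q x) ≤ fderiv ℝ d x v := ge_of_tendsto hslope hev
  rw [inner_gradient_eq_fderiv']
  linarith

lemma inner_affine_convexOn' (w b : E) (c : ℝ) :
    ConvexOn ℝ Set.univ (fun z => c + ⟪w, z - b⟫_ℝ) := by
  refine ⟨convex_univ, ?_⟩
  intro u _ v _ a a' ha ha' hab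
  simp only [smul_eq_mul, inner_sub_right, inner_add_right, real_inner_smul_right]
  apply le_of_eq
  linear_combination (⟪w, b⟫_ℝ - c) * hab

end Aux

theorem statement10 {p : ℕ} (T : ℕ) (ε : ℝ) (hε : 0 < ε)
    (d : EuclideanSpace ℝ (Fin p) → ℝ) (hd : Differentiable ℝ d)
    (hdconv : ConvexOn ℝ Set.univ d)
    (xi : EuclideanSpace ℝ (Fin p) → EuclideanSpace ℝ (Fin p) → ℝ)
    (hxi : ∀ x y : EuclideanSpace ℝ (Fin p), xi x y = d y - d x - ⟪gradient d x, y - x⟫_ℝ)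
    (h : EuclideanSpace ℝ (Fin p) → ℝ) (hh : ConvexOn ℝ Set.univ h)
    (g : ℕ → EuclideanSpace ℝ (Fin p) → ℝ)
    (hgconv : ∀ t ≤ T, ConvexOn ℝ Set.univ (g t))
    (hgdiff : ∀ t ≤ T, Differentiable ℝ (g t))
    (L : ℕ → ℝ) (hL : ∀ t ≤ T, 0 < L (t + 1))
    (x : ℕ → EuclideanSpace ℝ (Fin p))
    (hx0 : ∀ z : EuclideanSpace ℝ (Fin p), d (x 0) ≤ d z)
    (φ : ℕ → EuclideanSpace ℝ (Fin p) → ℝ)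
    (hφ0 : ∀ z : EuclideanSpace ℝ (Fin p), φ 0 z = xi (x 0) z)
    (hφsucc : ∀ t ≤ T, ∀ z : EuclideanSpace ℝ (Fin p),
      φ (t + 1) z = φ t z
        + 1 / (2 * L (t + 1)) * (g t (x t) + ⟪gradient (g t) (x t), z - x t⟫_ℝ + h z))
    (hxmin : ∀ t ≤ T, ∀ z : EuclideanSpace ℝ (Fin p), φ (t + 1) (x (t + 1)) ≤ φ (t + 1) z)
    (y : ℕ → EuclideanSpace ℝ (Fin p))
    (hy : ∀ t ≤ T, ∀ z : EuclideanSpace ℝ (Fin p),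
      g t (y t) + h (y t) ≤ g t (x t) + ⟪gradient (g t) (x t), z - x t⟫_ℝ
        + 2 * L (t + 1) * xi (x t) z + h z + ε / 2) :
    ∀ t ≤ T,
      ∑ i ∈ Finset.range (t + 1), 1 / (2 * L (i + 1)) * (g i (y i) + h (y i))
        ≤ φ (t + 1) (x (t + 1)) + ε / 4 * ∑ i ∈ Finset.range (t + 1), 1 / L (i + 1) := by
  -- xi is zero on the diagonal
  have hxi_self : ∀ u, xi u u = 0 := by
    intro u; simp [hxi]
  -- convexity of φ t - d
  have hqconv : ∀ t ≤ T + 1, ConvexOn ℝ Set.univ (fun z => φ t z - d z) := by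
    intro t
    induction t with
    | zero =>
      intro _
      have heq : (fun z => φ 0 z - d z)
          = fun z => (-(d (x 0))) + ⟪-(gradient d (x 0)), z - x 0⟫_ℝ := by
        funext z
        simp [hφ0, hxi, inner_neg_left]
        ring
      rw [heq]
      exact inner_affine_convexOn' _ _ _
    | succ t ih =>
      intro ht
      have ht' : t ≤ T := by omega
      have heq : (fun z => φ (t + 1) z - d z)
          = fun z => (φ t z - d z) + (1 / (2 * L (t + 1)))
              • ((g t (x t) + ⟪gradient (g t) (x t), z - x t⟫_ℝ) + h z) := by
        funext z
        rw [hφsucc t ht' z]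
        simp [smul_eq_mul]
        ring
      rw [heq]
      have hLt := hL t ht'
      refine (ih (by omega)).add (ConvexOn.smul (by positivity) ?_)
      exact (inner_affine_convexOn' _ _ _).add hh
  -- first-order optimality at x (t+1)
  have key : ∀ t ≤ T, ∀ z, φ (t + 1) (x (t + 1)) + xi (x (t + 1)) z ≤ φ (t + 1) z := by
    intro t ht z
    have hmin : ∀ w, d (x (t + 1)) + (φ (t + 1) w - d w + (φ (t + 1) (x (t + 1)) - d (x (t + 1)))
        - (φ (t + 1) w - d w)) ≤ d w + (φ (t + 1) w - d w) := by
      intro w; have := hxmin t ht w; linarith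
    have := min_first_order' d (fun w => φ (t + 1) w - d w) hd
      (hqconv (t + 1) (by omega)) (x (t + 1))
      (fun w => by have := hxmin t ht w; linarith) z
    rw [hxi]
    linarith
  -- the running constant
  set A : ℕ → ℝ := fun t => ∑ i ∈ Finset.range t,
    1 / (2 * L (i + 1)) * (g i (y i) + h (y i) - ε / 2) with hA
  -- inductive step
  have step : ∀ t ≤ T, (∀ z, A t + xi (x t) z ≤ φ t z) →
      ∀ z, A (t + 1) + xi (x (t + 1)) z ≤ φ (t + 1) z := by
    intro t ht ih z
    have hLt := hL t ht
    have hbound : A (t + 1) ≤ φ (t + 1) (x (t + 1)) := by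
      have h1 := ih (x (t + 1))
      have h2 := hy t ht (x (t + 1))
      have hφs := hφsucc t ht (x (t + 1))
      have hAeq : A (t + 1) = A t
          + 1 / (2 * L (t + 1)) * (g t (y t) + h (y t) - ε / 2) := by
        simp [hA, Finset.sum_range_succ]
      set ξv := xi (x t) (x (t + 1))
      set ℓv := g t (x t) + ⟪gradient (g t) (x t), x (t + 1) - x t⟫_ℝ + h (x (t + 1))
      have hc : (0:ℝ) < 1 / (2 * L (t + 1)) := by positivity
      have hcancel : 1 / (2 * L (t + 1)) * (2 * L (t + 1) * ξv) = ξv := by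
        field_simp
      have h2' : 1 / (2 * L (t + 1)) * (g t (y t) + h (y t))
          ≤ 1 / (2 * L (t + 1)) * (ℓv + 2 * L (t + 1) * ξv + ε / 2) := by
        apply mul_le_mul_of_nonneg_left _ hc.le
        simp only [ℓv]; linarith
      rw [hAeq, hφs]
      have hexp : 1 / (2 * L (t + 1)) * (ℓv + 2 * L (t + 1) * ξv + ε / 2)
          = 1 / (2 * L (t + 1)) * ℓv + ξv + 1 / (2 * L (t + 1)) * (ε / 2) := by
        rw [mul_add, mul_add, hcancel]
      rw [hexp] at h2'
      have : 1 / (2 * L (t + 1)) * (g t (y t) + h (y t) - ε / 2)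
          ≤ 1 / (2 * L (t + 1)) * ℓv + ξv := by
        rw [mul_sub] at *
        linarith
      simp only [ℓv] at this ⊢
      linarith
    have := key t ht z
    linarith
  -- the invariant
  have inv : ∀ t ≤ T + 1, ∀ z, A t + xi (x t) z ≤ φ t z := by
    intro t
    induction t with
    | zero =>
      intro _ z
      simp [hA, hφ0]
    | succ t ih =>
      intro ht
      exact step t (by omega) (ih (by omega))
  -- conclusion
  intro t ht
  have hfin : A (t + 1) ≤ φ (t + 1) (x (t + 1)) := by
    have := inv (t + 1) (by omega) (x (t + 1))
    rw [hxi_self] at this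
    linarith
  have hsum : A (t + 1) = (∑ i ∈ Finset.range (t + 1),
      1 / (2 * L (i + 1)) * (g i (y i) + h (y i)))
      - ε / 4 * ∑ i ∈ Finset.range (t + 1), 1 / L (i + 1) := by
    rw [hA, Finset.mul_sum, ← Finset.sum_sub_distrib]
    apply Finset.sum_congr rfl
    intro i hi
    have hi' : i ≤ T := by
      have := Finset.mem_range.mp hi; omega
    have hLi : L (i + 1) ≠ 0 := (hL i hi').ne'
    field_simp
    ring
  linarith
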